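/- There exists an absolute constant C > 0 such that for every m ∈ ℕ₊ and every m-fold symmetric f ∈ L¹(𝕋) with ∫_𝕋 f(φ) dφ = 0, there exists a continuous m-fold symmetric g : 𝕋 → ℂ with ∫_𝕋 g(φ) dφ = 0, g' = f in the sense of distributions on 𝕋, and ‖g‖_{L^∞(𝕋)} ≤ (C/m)·‖f‖_{L¹(𝕋)}. -/

import Mathlib

open MeasureTheory Filter Set

theorem statement7 :
    ∃ C > (0:ℝ), ∀ m : ℕ, 0 < m → ∀ f : ℝ → ℂ,
      (∀ x : ℝ, f (x + 2 * Real.pi / m) = f x) →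
      (∀ a b : ℝ, IntervalIntegrable f MeasureTheory.volume a b) →
      (∫ x in (0:ℝ)..(2 * Real.pi), f x) = 0 →
      ∃ g : ℝ → ℂ, Continuous g ∧
        (∀ x : ℝ, g (x + 2 * Real.pi / m) = g x) ∧
        (∫ x in (0:ℝ)..(2 * Real.pi), g x) = 0 ∧
        (∀ x : ℝ, g x - g 0 = ∫ t in (0:ℝ)..x, f t) ∧
        (∀ x : ℝ, ‖g x‖ ≤ (C / m) * ∫ t in (0:ℝ)..(2 * Real.pi), ‖f t‖) := by
  refine ⟨1, one_pos, ?_⟩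
  intro m hm f hper hint hzero
  set T : ℝ := 2 * Real.pi / m with hTdef
  have hmR : (0:ℝ) < m := by exact_mod_cast hm
  have hT0 : 0 < T := by positivity
  have hfp : Function.Periodic f T := hper
  have h2pi : (m : ℤ) • T = 2 * Real.pi := by
    rw [hTdef, zsmul_eq_mul]; push_cast; field_simp [hmR.ne']
  -- integral of f over one small period vanishes
  have hzsmulC : (∫ x in (0:ℝ)..(2*Real.pi), f x) = (m:ℤ) • ∫ x in (0:ℝ)..T, f x := by
    have := hfp.intervalIntegral_add_zsmul_eq (m : ℤ) 0 hint
    simpa [h2pi] using this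
  have hfT : (∫ x in (0:ℝ)..T, f x) = 0 := by
    have hmC : ((m:ℤ):ℂ) ≠ 0 := by exact_mod_cast Nat.cast_ne_zero.2 hm.ne'
    have := hzero ▸ hzsmulC
    rw [zsmul_eq_mul] at this
    exact (mul_eq_zero.1 this.symm).resolve_left hmC
  -- the primitive F
  set F : ℝ → ℂ := fun x => ∫ t in (0:ℝ)..x, f t with hFdef
  have hFcont : Continuous F := intervalIntegral.continuous_primitive hint 0
  have hFper : Function.Periodic F T := by
    intro x
    have h1 : (∫ t in x..x+T, f t) = ∫ t in (0:ℝ)..(0:ℝ)+T, f t :=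
      hfp.intervalIntegral_add_eq x 0
    have h2 : F x + (∫ t in x..x+T, f t) = F (x + T) :=
      intervalIntegral.integral_add_adjacent_intervals (hint 0 x) (hint x (x+T))
    rw [← h2, h1]
    simp [hfT]
  have hFint : ∀ a b, IntervalIntegrable F volume a b :=
    fun a b => hFcont.intervalIntegrable a b
  have hFzsmul : (∫ x in (0:ℝ)..(2*Real.pi), F x) = (m:ℤ) • ∫ x in (0:ℝ)..T, F x := by
    have := hFper.intervalIntegral_add_zsmul_eq (m : ℤ) 0 hFint
    simpa [h2pi] using this
  set c : ℂ := (∫ y in (0:ℝ)..T, F y) / (T : ℂ) with hcdef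
  refine ⟨fun x => F x - c, by fun_prop, ?_, ?_, ?_, ?_⟩
  · intro x; simp [hFper x]
  · have hTne : (T:ℂ) ≠ 0 := by exact_mod_cast hT0.ne'
    rw [intervalIntegral.integral_sub (hFint 0 _) (intervalIntegrable_const)]
    rw [hFzsmul, intervalIntegral.integral_const, hcdef]
    rw [zsmul_eq_mul, sub_zero, Complex.real_smul]
    have h2pi' : ((2*Real.pi : ℝ):ℂ) = (m:ℂ) * (T:ℂ) := by
      have hmC : (m:ℂ) ≠ 0 := Nat.cast_ne_zero.2 hm.ne'
      push_cast [hTdef]; field_simp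
    rw [h2pi']
    field_simp
    push_cast; ring
  · intro x
    simp [hFdef]
  · -- the sup bound
    intro x
    set I : ℝ := ∫ t in (0:ℝ)..T, ‖f t‖ with hIdef
    have hnp : Function.Periodic (fun t => ‖f t‖) T := fun t => by simp [hfp t]
    have hni : ∀ a b, IntervalIntegrable (fun t => ‖f t‖) volume a b :=
      fun a b => (hint a b).norm
    have hN : (∫ t in (0:ℝ)..(2*Real.pi), ‖f t‖) = (m:ℝ) * I := by
      have := hnp.intervalIntegral_add_zsmul_eq (m : ℤ) 0 hni
      simp only [zero_add, h2pi] at this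
      rw [this, zsmul_eq_mul]; push_cast; ring
    -- difference bound on one period
    have key : ∀ u ∈ Icc (0:ℝ) T, ∀ v ∈ Icc (0:ℝ) T, ‖F u - F v‖ ≤ I := by
      intro u hu v hv
      have hsub : F u - F v = ∫ t in v..u, f t :=
        (intervalIntegral.integral_interval_sub_left (hint 0 u) (hint 0 v))
      rw [hsub]
      refine (intervalIntegral.norm_integral_le_abs_integral_norm).trans ?_
      rcases le_total v u with h | h
      · rw [abs_of_nonneg (intervalIntegral.integral_nonneg h (fun t _ => norm_nonneg _))]
        exact intervalIntegral.integral_mono_interval hv.1 h hu.2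
          (Eventually.of_forall fun t => norm_nonneg _) (hni 0 T)
      · rw [intervalIntegral.integral_symm, abs_neg,
          abs_of_nonneg (intervalIntegral.integral_nonneg h (fun t _ => norm_nonneg _))]
        exact intervalIntegral.integral_mono_interval hu.1 h hv.2
          (Eventually.of_forall fun t => norm_nonneg _) (hni 0 T)
    have hgper : Function.Periodic (fun x => F x - c) T := fun t => by simp [hFper t]
    obtain ⟨x', hx', hgx⟩ := hgper.exists_mem_Ico₀ hT0 x
    have hx'Icc : x' ∈ Icc (0:ℝ) T := ⟨hx'.1, hx'.2.le⟩
    have hbound : ‖F x' - c‖ ≤ I := by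
      have hTne : (T:ℂ) ≠ 0 := by exact_mod_cast hT0.ne'
      have hrepr : F x' - c = (∫ y in (0:ℝ)..T, (F x' - F y)) / (T:ℂ) := by
        rw [intervalIntegral.integral_sub intervalIntegrable_const (hFint 0 T),
          intervalIntegral.integral_const, hcdef, sub_zero, Complex.real_smul]
        field_simp
      rw [hrepr, norm_div]
      have hnormT : ‖(T:ℂ)‖ = T := by
        rw [Complex.norm_real, Real.norm_of_nonneg hT0.le]
      rw [hnormT, div_le_iff₀ hT0]
      have := intervalIntegral.norm_integral_le_of_norm_le_const
        (C := I) (a := (0:ℝ)) (b := T) (f := fun y => F x' - F y) ?_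
      · simpa [abs_of_nonneg hT0.le] using this
      · intro y hy
        have hy' : y ∈ Icc (0:ℝ) T := by
          rw [uIoc_of_le hT0.le] at hy
          exact ⟨hy.1.le, hy.2⟩
        exact key x' hx'Icc y hy'
    calc ‖F x - c‖ = ‖F x' - c‖ := by rw [hgx]
      _ ≤ I := hbound
      _ = (1 / m) * ((m:ℝ) * I) := by field_simp
      _ = (1 / m) * ∫ t in (0:ℝ)..(2*Real.pi), ‖f t‖ := by rw [hN]
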